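/- (Example 4.1) Let A ∈ ℍ^{2×2} be the matrix with rows (1, k) and (k, 1). Then the set of left eigenvalues of A is exactly {1 + k, 1 − k}. -/

import Mathlib

open Matrix

/-- `λ` is a left eigenvalue of `A` if `A v = λ v` for some nonzero `v`. -/
def IsLeftEigenvalue {m : ℕ} (A : Matrix (Fin m) (Fin m) (Quaternion ℝ))
    (l : Quaternion ℝ) : Prop :=
  ∃ v : Fin m → Quaternion ℝ, v ≠ 0 ∧ A.mulVec v = l • v

/-- `λ` is a right eigenvalue of `A` if `A v = v λ` for some nonzero `v`. -/
def IsRightEigenvalue {m : ℕ} (A : Matrix (Fin m) (Fin m) (Quaternion ℝ))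
    (l : Quaternion ℝ) : Prop :=
  ∃ v : Fin m → Quaternion ℝ, v ≠ 0 ∧ A.mulVec v = fun s => v s * l

/-- Example 4.1: the left eigenvalues of `[[1, k], [k, 1]]` are
exactly `1 + k` and `1 − k`. -/
theorem example_4_1 :
    {l : Quaternion ℝ |
        IsLeftEigenvalue
          (!![1, (⟨0, 0, 0, 1⟩ : Quaternion ℝ); (⟨0, 0, 0, 1⟩ : Quaternion ℝ), 1]) l} =
      {1 + (⟨0, 0, 0, 1⟩ : Quaternion ℝ), 1 - (⟨0, 0, 0, 1⟩ : Quaternion ℝ)} := by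
  ext l
  simp only [Set.mem_setOf_eq, Set.mem_insert_iff, Set.mem_singleton_iff]
  constructor
  · rintro ⟨v, hv, hAv⟩
    have h0 := congrFun hAv 0
    have h1 := congrFun hAv 1
    simp [Matrix.mulVec, dotProduct, Fin.sum_univ_two] at h0 h1
    clear hAv
    set K : Quaternion ℝ := ⟨0, 0, 0, 1⟩ with hK
    have hKr : K.re = 0 := rfl
    have hKi : K.imI = 0 := rfl
    have hKj : K.imJ = 0 := rfl
    have hKk : K.imK = 1 := rfl
    have hKK : K * K = -1 := by
      simp [Quaternion.ext_iff, Quaternion.re_mul, Quaternion.imI_mul, Quaternion.imJ_mul, Quaternion.imK_mul, hKr, hKi, hKj, hKk, Quaternion.re_one, Quaternion.imI_one, Quaternion.imJ_one, Quaternion.imK_one]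
    have hKne : K ≠ 0 := by
      simp [Quaternion.ext_iff, hKk, Quaternion.re_zero, Quaternion.imI_zero, Quaternion.imJ_zero, Quaternion.imK_zero]
    have hv1 : v 1 ≠ 0 := by
      intro h10
      rw [h10, add_zero, mul_zero] at h1
      have h00 : v 0 = 0 := by
        rcases mul_eq_zero.mp h1 with h | h
        · exact absurd h hKne
        · exact h
      apply hv
      funext i; fin_cases i
      · exact h00
      · exact h10
    have e0 : (l - 1) * v 0 = K * v 1 := by
      rw [sub_mul, one_mul, ← h0]; abel
    have e1 : (l - 1) * v 1 = K * v 0 := by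
      rw [sub_mul, one_mul, ← h1]; abel
    have key : ((l - 1) * K * (l - 1) + K) * v 1 = 0 := by
      have step : (l - 1) * K * (l - 1) * v 1 = -(K * v 1) := by
        calc (l - 1) * K * (l - 1) * v 1 = (l - 1) * K * ((l - 1) * v 1) := by
              rw [mul_assoc]
          _ = (l - 1) * (K * K) * v 0 := by rw [e1]; noncomm_ring
          _ = -((l - 1) * v 0) := by rw [hKK]; noncomm_ring
          _ = -(K * v 1) := by rw [e0]
      rw [add_mul, step]; abel
    have hq : (l - 1) * K * (l - 1) + K = 0 := by
      rcases mul_eq_zero.mp key with h | h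
      · exact h
      · exact absurd h hv1
    rw [Quaternion.ext_iff] at hq
    simp only [Quaternion.re_mul, Quaternion.imI_mul, Quaternion.imJ_mul,
      Quaternion.imK_mul, Quaternion.re_add, Quaternion.imI_add, Quaternion.imJ_add,
      Quaternion.imK_add, Quaternion.re_sub, Quaternion.imI_sub, Quaternion.imJ_sub,
      Quaternion.imK_sub, Quaternion.re_one, Quaternion.imI_one, Quaternion.imJ_one,
      Quaternion.imK_one, Quaternion.re_zero, Quaternion.imI_zero, Quaternion.imJ_zero,
      Quaternion.imK_zero, hKr, hKi, hKj, hKk] at hq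
    obtain ⟨hre, hi, hj, hk2⟩ := hq
    ring_nf at hre hi hj hk2
    set a := l.re with ha'
    set b := l.imI with hb'
    set c := l.imJ with hc'
    set d := l.imK with hd'
    have hd : d ≠ 0 := by
      intro h
      rw [h] at hk2
      nlinarith [sq_nonneg (a - 1), sq_nonneg b, sq_nonneg c]
    have ha : a = 1 := by
      have h2 : (a - 1) * d = 0 := by nlinarith
      rcases mul_eq_zero.mp h2 with h | h
      · linarith
      · exact absurd h hd
    have hb : b = 0 := by
      have h2 : b * d = 0 := by nlinarith
      rcases mul_eq_zero.mp h2 with h | h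
      · exact h
      · exact absurd h hd
    have hc : c = 0 := by
      have h2 : c * d = 0 := by nlinarith
      rcases mul_eq_zero.mp h2 with h | h
      · exact h
      · exact absurd h hd
    have hdd : d = 1 ∨ d = -1 := by
      have h2 : (d - 1) * (d + 1) = 0 := by nlinarith
      rcases mul_eq_zero.mp h2 with h | h
      · left; linarith
      · right; linarith
    rcases hdd with h | h
    · left
      show l = (1 + K : Quaternion ℝ)
      rw [Quaternion.ext_iff]
      refine ⟨?_, ?_, ?_, ?_⟩ <;>
        simp [← ha', ← hb', ← hc', ← hd', ha, hb, hc, h, hKr, hKi, hKj, hKk, Quaternion.re_one, Quaternion.imI_one, Quaternion.imJ_one, Quaternion.imK_one]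
    · right
      show l = (1 - K : Quaternion ℝ)
      rw [Quaternion.ext_iff]
      refine ⟨?_, ?_, ?_, ?_⟩ <;>
        simp [← ha', ← hb', ← hc', ← hd', ha, hb, hc, h, hKr, hKi, hKj, hKk, Quaternion.re_one, Quaternion.imI_one, Quaternion.imJ_one, Quaternion.imK_one]
  · set K : Quaternion ℝ := ⟨0, 0, 0, 1⟩ with hK
    have hKr : K.re = 0 := rfl
    have hKi : K.imI = 0 := rfl
    have hKj : K.imJ = 0 := rfl
    have hKk : K.imK = 1 := rfl
    show l = (1 + K : Quaternion ℝ) ∨ l = (1 - K : Quaternion ℝ) → IsLeftEigenvalue !![1, K; K, 1] l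
    rintro (rfl | rfl)
    · exact ⟨![1, 1], by simp, by
        funext i; fin_cases i <;>
          simp [Matrix.mulVec, dotProduct, Fin.sum_univ_two] <;>
          simp [Quaternion.ext_iff, Quaternion.re_mul, Quaternion.imI_mul, Quaternion.imJ_mul, Quaternion.imK_mul, Quaternion.re_one, Quaternion.imI_one, Quaternion.imJ_one, Quaternion.imK_one, hKr, hKi, hKj, hKk]⟩
    · exact ⟨![1, -1], by simp, by
        funext i; fin_cases i <;>
          simp [Matrix.mulVec, dotProduct, Fin.sum_univ_two] <;>
          simp [Quaternion.ext_iff, Quaternion.re_mul, Quaternion.imI_mul, Quaternion.imJ_mul, Quaternion.imK_mul, Quaternion.re_one, Quaternion.imI_one, Quaternion.imJ_one, Quaternion.imK_one, hKr, hKi, hKj, hKk]⟩
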